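/- Let S be simple random walk on ℤ and, for k ∈ ℤ with k ≠ 0, let H_k be the first hitting time of k. Then for every m ∈ ℕ with m ≥ 1: if m and k have the same parity then P(H_k = m) = (|k|/m)·binom(m, (m+|k|)/2)·2^{−m}, and if m and k have different parity then P(H_k = m) = 0. -/

import Mathlib

open MeasureTheory Finset
open scoped ProbabilityTheory

private lemma consEmb_inj (a : ℤ) : Function.Injective (fun l : List ℤ => a :: l) :=
  fun x y h => by simpa using h

private def consEmb (a : ℤ) : List ℤ ↪ List ℤ :=
  ⟨fun l => a :: l, consEmb_inj a⟩

private def tuples : ℕ → Finset (List ℤ)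
  | 0 => {[]}
  | n+1 => ((tuples n).map (consEmb 1)) ∪ ((tuples n).map (consEmb (-1)))

private def hitPred (m : ℕ) (k : ℤ) (l : List ℤ) : Prop :=
  l.sum = k ∧ ∀ j ∈ Finset.Ico 1 m, (l.take j).sum ≠ k

private instance (m : ℕ) (k : ℤ) : DecidablePred (hitPred m k) := fun l => by
  unfold hitPred; infer_instance

private def fpc (m : ℕ) (k : ℤ) : ℕ :=
  ((tuples m).filter (hitPred m k)).card

private lemma mem_tuples {m : ℕ} {l : List ℤ} :
    l ∈ tuples m ↔ l.length = m ∧ ∀ x ∈ l, x = 1 ∨ x = -1 := by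
  induction m generalizing l with
  | zero => simp [tuples]; rintro rfl; simp
  | succ n ih =>
    simp only [tuples, Finset.mem_union, Finset.mem_map, consEmb,
      Function.Embedding.coeFn_mk]
    constructor
    · rintro (⟨t, ht, rfl⟩ | ⟨t, ht, rfl⟩) <;>
        simp_all [ih]
    · rintro ⟨hlen, hx⟩
      rcases l with _ | ⟨a, t⟩
      · simp at hlen
      · have ha := hx a (by simp)
        have ht : t ∈ tuples n := ih.2 ⟨by simpa using hlen, fun x hx' => hx x (by simp [hx'])⟩
        rcases ha with rfl | rfl
        · exact Or.inl ⟨t, ht, rfl⟩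
        · exact Or.inr ⟨t, ht, rfl⟩

private lemma tuples_sum {m : ℕ} {l : List ℤ} (h : l ∈ tuples m) :
    l.sum % 2 = (m : ℤ) % 2 ∧ l.sum.natAbs ≤ m := by
  induction m generalizing l with
  | zero => simp [tuples] at h; simp [h]
  | succ n ih =>
    simp only [tuples, Finset.mem_union, Finset.mem_map, consEmb,
      Function.Embedding.coeFn_mk] at h
    rcases h with ⟨t, ht, rfl⟩ | ⟨t, ht, rfl⟩ <;>
      · obtain ⟨h1, h2⟩ := ih ht
        simp only [List.sum_cons]
        constructor <;> push_cast <;> omega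

private lemma hitPred_cons {n : ℕ} (hn : 1 ≤ n) {a k : ℤ} (hak : a ≠ k) (l : List ℤ) :
    hitPred (n+1) k (a :: l) ↔ hitPred n (k - a) l := by
  unfold hitPred
  constructor
  · rintro ⟨hs, hp⟩
    refine ⟨by simp at hs ⊢; omega, ?_⟩
    intro j hj
    have := hp (j+1) (by simp at hj ⊢; omega)
    simp only [List.take_succ_cons, List.sum_cons] at this ⊢
    omega
  · rintro ⟨hs, hp⟩
    refine ⟨by simp; omega, ?_⟩
    intro j hj
    simp only [Finset.mem_Ico] at hj
    obtain ⟨j, rfl⟩ : ∃ j', j = j'+1 := ⟨j-1, by omega⟩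
    rcases Nat.eq_zero_or_pos j with rfl | hjpos
    · simpa using hak
    · have := hp j (by simp; omega)
      simp only [List.take_succ_cons, List.sum_cons]
      omega

private lemma not_hitPred_cons {n : ℕ} (hn : 1 ≤ n) (k : ℤ) (l : List ℤ) :
    ¬ hitPred (n+1) k (k :: l) := by
  rintro ⟨-, hp⟩
  exact hp 1 (by simp; omega) (by simp)

private lemma fpc_succ (n : ℕ) (hn : 1 ≤ n) (k : ℤ) :
    fpc (n+1) k = (if k = 1 then 0 else fpc n (k-1))
      + (if k = -1 then 0 else fpc n (k+1)) := by
  have hdisj : Disjoint ((tuples n).map (consEmb 1)) ((tuples n).map (consEmb (-1))) := by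
    simp only [Finset.disjoint_left, Finset.mem_map, consEmb, Function.Embedding.coeFn_mk]
    rintro l ⟨t, -, rfl⟩ ⟨t', -, h⟩
    simp at h
  have key : ∀ a : ℤ,
      ((tuples n).filter (hitPred (n+1) k ∘ (consEmb a))).card
        = if k = a then 0 else fpc n (k - a) := by
    intro a
    split_ifs with h
    · subst h
      rw [Finset.card_eq_zero, Finset.filter_eq_empty_iff]
      intro l _
      exact not_hitPred_cons hn k l
    · rw [fpc]
      congr 1
      apply Finset.filter_congr
      intro l _
      simp only [consEmb, Function.Embedding.coeFn_mk, Function.comp_apply, eq_iff_iff]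
      exact hitPred_cons hn (fun h' => h h'.symm) l
  rw [fpc, show tuples (n+1) = ((tuples n).map (consEmb 1)) ∪ ((tuples n).map (consEmb (-1))) from rfl,
    Finset.filter_union, Finset.card_union_of_disjoint
      (Finset.disjoint_filter_filter hdisj), Finset.filter_map, Finset.card_map,
    Finset.filter_map, Finset.card_map, key 1, key (-1)]
  norm_num

private lemma fpc_one (k : ℤ) :
    fpc 1 k = (if k = 1 then 1 else 0) + (if k = -1 then 1 else 0) := by
  have h1 : tuples 1 = {[1], [-1]} := rfl
  rw [fpc, h1]
  rw [Finset.filter_insert, Finset.filter_singleton]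
  have hp : ∀ a : ℤ, hitPred 1 k ([a]) ↔ k = a := by
    intro a
    unfold hitPred
    simp [eq_comm]
  by_cases hk1 : k = 1 <;> by_cases hk2 : k = -1 <;>
    simp_all [hp]

private lemma count_theorem :
    ∀ n, 1 ≤ n → ∀ k : ℕ, 1 ≤ k → ∀ p : ℕ, 2 * p = n + k →
      fpc n k + Nat.choose (n-1) p = Nat.choose (n-1) (p-1) := by
  intro n hn
  induction n, hn using Nat.le_induction with
  | base =>
    intro k hk p hp
    rw [fpc_one]
    rcases eq_or_lt_of_le hk with h | h
    · have : p = 1 := by omega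
      subst this
      simp [← h, show ¬ ((k:ℤ) = -1) by omega]
    · have hk1 : ¬ ((k:ℤ) = 1) := by omega
      have hk2 : ¬ ((k:ℤ) = -1) := by omega
      have hp2 : 2 ≤ p := by omega
      simp [hk1, hk2, Nat.choose_eq_zero_of_lt (show 0 < p by omega),
        Nat.choose_eq_zero_of_lt (show 0 < p - 1 by omega)]
  | succ n hn ih =>
    intro k hk p hp
    rw [fpc_succ n hn]
    have hp2 : 2 ≤ p := by omega
    have hps : (n + 1 - 1) = n := by omega
    rcases eq_or_lt_of_le hk with h | h
    · -- k = 1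
      have hk1 : (k:ℤ) = 1 := by omega
      have hknum : k = 1 := by omega
      subst hknum
      rw [if_pos (by norm_num), if_neg (by norm_num)]
      have ih2 := ih 2 (by norm_num) p (by omega)
      have hsymm : Nat.choose (n-1) (p-1) = Nat.choose (n-1) (p-2) := by
        rw [← Nat.choose_symm (show p - 1 ≤ n - 1 by omega)]
        congr 1
        omega
      have pas1 : Nat.choose n p = Nat.choose (n-1) (p-1) + Nat.choose (n-1) p := by
        have := Nat.choose_succ_succ (n-1) (p-1)
        simp only [Nat.succ_eq_add_one] at this
        rw [show n - 1 + 1 = n by omega, show p - 1 + 1 = p by omega] at this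
        omega
      have pas2 : Nat.choose n (p-1) = Nat.choose (n-1) (p-2) + Nat.choose (n-1) (p-1) := by
        have := Nat.choose_succ_succ (n-1) (p-2)
        simp only [Nat.succ_eq_add_one] at this
        rw [show n - 1 + 1 = n by omega, show p - 2 + 1 = p - 1 by omega] at this
        omega
      rw [hps, show ((1:ℕ):ℤ) + 1 = ((2:ℕ):ℤ) by norm_num, pas1, pas2]
      omega
    · -- k ≥ 2
      have hk1 : ¬ ((k:ℤ) = 1) := by omega
      have hk2 : ¬ ((k:ℤ) = -1) := by omega
      rw [if_neg hk1, if_neg hk2]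
      have he1 : (k:ℤ) - 1 = ((k-1 : ℕ) : ℤ) := by omega
      have he2 : (k:ℤ) + 1 = ((k+1 : ℕ) : ℤ) := by omega
      have ih1 := ih (k-1) (by omega) (p-1) (by omega)
      have ih2 := ih (k+1) (by omega) p (by omega)
      have pas1 : Nat.choose n p = Nat.choose (n-1) (p-1) + Nat.choose (n-1) p := by
        have := Nat.choose_succ_succ (n-1) (p-1)
        simp only [Nat.succ_eq_add_one] at this
        rw [show n - 1 + 1 = n by omega, show p - 1 + 1 = p by omega] at this
        omega
      have pas2 : Nat.choose n (p-1) = Nat.choose (n-1) (p-2) + Nat.choose (n-1) (p-1) := by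
        have := Nat.choose_succ_succ (n-1) (p-2)
        simp only [Nat.succ_eq_add_one] at this
        rw [show n - 1 + 1 = n by omega, show p - 2 + 1 = p - 1 by omega] at this
        omega
      rw [hps, he1, he2, pas1, pas2]
      rw [show p - 1 - 1 = p - 2 by omega] at ih1
      omega

private lemma sum_map_neg (l : List ℤ) : (l.map (fun x => -x)).sum = -l.sum := by
  induction l with
  | nil => simp
  | cons a t ih => simp [ih]; ring

private lemma memNegAux {m : ℕ} {k : ℤ} {l : List ℤ}
    (h : l ∈ (tuples m).filter (hitPred m k)) :
    (l.map (fun x => -x)) ∈ (tuples m).filter (hitPred m (-k)) := by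
  simp only [Finset.mem_filter, mem_tuples, hitPred] at h ⊢
  obtain ⟨⟨hlen, hmem⟩, hsum, hpre⟩ := h
  refine ⟨⟨by simpa using hlen, ?_⟩, ?_, ?_⟩
  · intro x hx
    simp only [List.mem_map] at hx
    obtain ⟨y, hy, rfl⟩ := hx
    rcases hmem y hy with rfl | rfl <;> simp
  · rw [sum_map_neg, hsum]
  · intro j hj
    rw [← List.map_take, sum_map_neg]
    have := hpre j hj
    omega

private lemma fpc_neg (m : ℕ) (k : ℤ) : fpc m k = fpc m (-k) := by
  unfold fpc
  apply Finset.card_bij' (fun l _ => l.map (fun x : ℤ => -x))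
    (fun l _ => l.map (fun x : ℤ => -x))
  · intro a ha; simp [List.map_map, Function.comp_def]
  · intro a ha; simp [List.map_map, Function.comp_def]
  · intro a ha; simpa [Finset.mem_filter] using memNegAux ha
  · intro a ha; simpa [Finset.mem_filter] using memNegAux ha

private lemma fpc_zero_of_gt {m : ℕ} {k : ℤ} (h : m < k.natAbs) : fpc m k = 0 := by
  rw [fpc, Finset.card_eq_zero, Finset.filter_eq_empty_iff]
  intro l hl
  rintro ⟨hs, -⟩
  have := (tuples_sum hl).2
  rw [hs] at this
  omega

private lemma fpc_mul (m : ℕ) (hm : 1 ≤ m) (κ : ℕ) (hκ : 1 ≤ κ)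
    (hpar : m % 2 = κ % 2) :
    m * fpc m (κ:ℤ) = κ * Nat.choose m ((m + κ)/2) := by
  by_cases hle : κ ≤ m
  · set p := (m + κ)/2 with hp
    have h2p : 2 * p = m + κ := by omega
    have hct := count_theorem m hm κ hκ p h2p
    have hp1 : 1 ≤ p := by omega
    have hpm : p ≤ m := by omega
    have e1 : m * Nat.choose (m-1) (p-1) = p * Nat.choose m p := by
      have := Nat.add_one_mul_choose_eq (m-1) (p-1)
      rw [show m-1+1 = m by omega, show p-1+1 = p by omega] at this
      rw [this, Nat.mul_comm]
    have e2 : m * Nat.choose (m-1) p = (m - p) * Nat.choose m p := by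
      rcases eq_or_lt_of_le hpm with h | h
      · rw [h]
        simp [Nat.choose_eq_zero_of_lt (show m - 1 < m by omega)]
      · have hsym : Nat.choose (m-1) ((m-1) - p) = Nat.choose (m-1) p :=
          Nat.choose_symm (by omega)
        have h3 := Nat.add_one_mul_choose_eq (m-1) (m-1-p)
        rw [show m-1+1 = m by omega, show m-1-p+1 = m - p by omega, hsym,
          Nat.choose_symm hpm] at h3
        rw [h3, Nat.mul_comm]
    have hmul : m * fpc m (κ:ℤ) + m * Nat.choose (m-1) p
        = m * Nat.choose (m-1) (p-1) := by
      rw [← Nat.mul_add, hct]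
    rw [e1, e2] at hmul
    have hsplit : p * Nat.choose m p
        = (m - p) * Nat.choose m p + κ * Nat.choose m p := by
      rw [← Nat.add_mul]
      congr 1
      omega
    rw [hsplit] at hmul
    rw [Nat.add_comm ((m-p) * m.choose p)] at hmul
    exact Nat.add_right_cancel hmul
  · have h0 : fpc m (κ:ℤ) = 0 := fpc_zero_of_gt (by simpa using by omega)
    have hch : Nat.choose m ((m+κ)/2) = 0 :=
      Nat.choose_eq_zero_of_lt (by omega)
    simp [h0, hch]

private lemma sum_take (l : List ℤ) (j : ℕ) (hj : j ≤ l.length) :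
    (∑ i ∈ Finset.range j, l.getD i 0) = (l.take j).sum := by
  induction j with
  | zero => simp
  | succ j ih =>
    have hlt : j < l.length := by omega
    rw [Finset.sum_range_succ, ih (by omega), List.sum_take_succ l j hlt]
    simp [List.getD, List.getElem?_eq_getElem hlt]

/-- Hitting time distribution for simple random walk: if `H` is the first
hitting time of `k ≠ 0`, then for `m ≥ 1` of the same parity as `k`,
`P(H = m) = (|k|/m) · C(m, (m+|k|)/2) · 2^{−m}`, and `P(H = m) = 0` if the
parities differ. -/
theorem stmt_4
    {Ω : Type*} [MeasureSpace Ω] [IsProbabilityMeasure (ℙ : Measure Ω)]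
    (ζ : ℕ → Ω → ℤ)
    (hmeas : ∀ i, Measurable (ζ i))
    (hindep : ∀ (I : Finset ℕ) (v : ℕ → ℤ),
      ℙ {ω | ∀ i ∈ I, ζ i ω = v i} = ∏ i ∈ I, ℙ {ω | ζ i ω = v i})
    (hdist : ∀ i, ℙ {ω | ζ i ω = 1} = 1/2 ∧ ℙ {ω | ζ i ω = -1} = 1/2)
    (k : ℤ) (hk : k ≠ 0)
    (H : Ω → ℕ)
    (hH : ∀ ω, H ω = sInf {m : ℕ | 1 ≤ m ∧ ∑ i ∈ Finset.range m, ζ i ω = k})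
    (m : ℕ) (hm : 1 ≤ m) :
    (m % 2 = k.natAbs % 2 →
      ℙ {ω | H ω = m}
        = ENNReal.ofReal
            (((k.natAbs : ℝ) / m) * (m.choose ((m + k.natAbs)/2)) * (2:ℝ)⁻¹ ^ m))
    ∧ (m % 2 ≠ k.natAbs % 2 → ℙ {ω | H ω = m} = 0) := by
  classical
  -- Step 1: characterize the event
  have hE : {ω | H ω = m}
      = {ω | (∑ i ∈ Finset.range m, ζ i ω) = k
          ∧ ∀ j ∈ Finset.Ico 1 m, (∑ i ∈ Finset.range j, ζ i ω) ≠ k} := by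
    ext ω
    simp only [Set.mem_setOf_eq, hH ω]
    constructor
    · intro h
      have hne : {n : ℕ | 1 ≤ n ∧ ∑ i ∈ Finset.range n, ζ i ω = k}.Nonempty := by
        by_contra h'
        rw [Set.not_nonempty_iff_eq_empty] at h'
        rw [h', Nat.sInf_empty] at h
        omega
      have hmem := Nat.sInf_mem hne
      rw [h] at hmem
      refine ⟨hmem.2, ?_⟩
      intro j hj
      simp only [Finset.mem_Ico] at hj
      have := Nat.notMem_of_lt_sInf (show j < sInf _ by rw [h]; exact hj.2)
      simp only [Set.mem_setOf_eq, not_and] at this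
      exact this hj.1
    · rintro ⟨hs, hp⟩
      have hmem : m ∈ {n : ℕ | 1 ≤ n ∧ ∑ i ∈ Finset.range n, ζ i ω = k} := ⟨hm, hs⟩
      refine le_antisymm (Nat.sInf_le hmem) ?_
      by_contra h'
      push_neg at h'
      have hlt : sInf {n : ℕ | 1 ≤ n ∧ ∑ i ∈ Finset.range n, ζ i ω = k} < m := h'
      have hmem2 := Nat.sInf_mem ⟨m, hmem⟩
      exact hp _ (Finset.mem_Ico.mpr ⟨hmem2.1, hlt⟩) hmem2.2
  -- the good set
  set G : Set Ω := {ω | ∀ i < m, ζ i ω = 1 ∨ ζ i ω = -1} with hG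
  have hGc : ℙ Gᶜ = 0 := by
    have hsub : Gᶜ ⊆ ⋃ i : Fin m, ({ω | ζ i.1 ω = 1} ∪ {ω | ζ i.1 ω = -1})ᶜ := by
      intro ω hω
      simp only [hG, Set.mem_compl_iff, Set.mem_setOf_eq, not_forall] at hω
      obtain ⟨i, hi, hne⟩ := hω
      simp only [Set.mem_iUnion, Set.mem_compl_iff, Set.mem_union, Set.mem_setOf_eq]
      exact ⟨⟨i, hi⟩, by push_neg; push_neg at hne; exact hne⟩
    refine measure_mono_null hsub (measure_iUnion_null ?_)
    intro i
    have hmeas1 : MeasurableSet {ω | ζ i.1 ω = 1} := hmeas i.1 (measurableSet_singleton 1)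
    have hmeas2 : MeasurableSet {ω | ζ i.1 ω = -1} := hmeas i.1 (measurableSet_singleton (-1))
    have hdisj : Disjoint {ω | ζ i.1 ω = 1} {ω | ζ i.1 ω = -1} := by
      rw [Set.disjoint_left]
      intro ω h1 h2
      simp only [Set.mem_setOf_eq] at h1 h2
      rw [h1] at h2; norm_num at h2
    have hun : ℙ ({ω | ζ i.1 ω = 1} ∪ {ω | ζ i.1 ω = -1}) = 1 := by
      rw [measure_union hdisj hmeas2, (hdist i.1).1, (hdist i.1).2]
      rw [one_div, ENNReal.inv_two_add_inv_two]
    rw [measure_compl (hmeas1.union hmeas2) (measure_ne_top _ _), hun, measure_univ]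
    simp
  -- atoms
  set atom : List ℤ → Set Ω :=
    fun l => {ω | ∀ i ∈ Finset.range m, ζ i ω = l.getD i 0} with hatom
  have h_atom_meas : ∀ l : List ℤ, MeasurableSet (atom l) := by
    intro l
    have : atom l = ⋂ i ∈ Finset.range m, {ω | ζ i ω = l.getD i 0} := by
      ext ω; simp [hatom, Set.mem_iInter]
    rw [this]
    exact Set.Finite.measurableSet_biInter (Finset.finite_toSet _)
      (fun i _ => hmeas i (measurableSet_singleton _))
  have h_atom_prob : ∀ l ∈ (tuples m).filter (hitPred m k),
      ℙ (atom l) = (2⁻¹ : ENNReal) ^ m := by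
    intro l hl
    rw [Finset.mem_filter, mem_tuples] at hl
    obtain ⟨⟨hlen, hval⟩, -⟩ := hl
    rw [hatom, hindep (Finset.range m) (fun i => l.getD i 0)]
    rw [show ((2:ENNReal)⁻¹) ^ m = ∏ _i ∈ Finset.range m, (2:ENNReal)⁻¹ by
      rw [Finset.prod_const, Finset.card_range]]
    apply Finset.prod_congr rfl
    intro i hi
    have hilt : i < l.length := by rw [hlen]; exact Finset.mem_range.mp hi
    have hmem : l.getD i 0 ∈ l := by
      rw [List.getD_eq_getElem l 0 hilt]
      exact List.getElem_mem hilt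
    rcases hval _ hmem with h | h <;> rw [h]
    · rw [(hdist i).1, one_div]
    · rw [(hdist i).2, one_div]
  have h_disj : (↑((tuples m).filter (hitPred m k)) : Set (List ℤ)).PairwiseDisjoint atom := by
    intro l hl l' hl' hne
    rw [Finset.coe_filter, Set.mem_setOf_eq] at hl hl'
    have hlen : l.length = m := (mem_tuples.mp hl.1).1
    have hlen' : l'.length = m := (mem_tuples.mp hl'.1).1
    rw [Function.onFun, Set.disjoint_left]
    intro ω h1 h2
    apply hne
    apply List.ext_getElem (by rw [hlen, hlen'])
    intro n h₁ h₂
    have hn : n ∈ Finset.range m := Finset.mem_range.mpr (by omega)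
    have e1 := h1 n hn
    have e2 := h2 n hn
    rw [List.getD_eq_getElem l 0 h₁] at e1
    rw [List.getD_eq_getElem l' 0 h₂] at e2
    rw [← e1, ← e2]
  have h_union : {ω | H ω = m} ∩ G = ⋃ l ∈ (tuples m).filter (hitPred m k), atom l := by
    ext ω
    constructor
    · rintro ⟨hωE, hωG⟩
      rw [hE] at hωE
      obtain ⟨hs, hp⟩ := hωE
      set l : List ℤ := List.ofFn (fun i : Fin m => ζ i.1 ω) with hldef
      have hlen : l.length = m := by simp [hldef]
      have hgetD : ∀ i < m, l.getD i 0 = ζ i ω := by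
        intro i hi
        have hilt : i < l.length := by omega
        rw [List.getD_eq_getElem l 0 hilt]
        simp [hldef]
      have hsum : ∀ j ≤ m, (l.take j).sum = ∑ i ∈ Finset.range j, ζ i ω := by
        intro j hj
        rw [← sum_take l j (by omega)]
        apply Finset.sum_congr rfl
        intro i hi
        have him : i < j := Finset.mem_range.mp hi
        rw [hgetD i (by omega)]
      have hltup : l ∈ (tuples m).filter (hitPred m k) := by
        rw [Finset.mem_filter, mem_tuples]
        refine ⟨⟨hlen, ?_⟩, ?_, ?_⟩
        · intro x hx
          rw [hldef, List.mem_ofFn] at hx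
          obtain ⟨i, rfl⟩ := hx
          exact hωG i.1 i.2
        · rw [show l.sum = (l.take m).sum by rw [List.take_of_length_le (by omega)],
            hsum m le_rfl]
          exact hs
        · intro j hj
          rw [hsum j (by simp at hj; omega)]
          exact hp j hj
      refine Set.mem_biUnion hltup ?_
      intro i hi
      rw [hgetD i (Finset.mem_range.mp hi)]
    · intro hω
      rw [Set.mem_iUnion₂] at hω
      obtain ⟨l, hl, hωl⟩ := hω
      rw [Finset.mem_filter] at hl
      obtain ⟨hltup, hsum, hpre⟩ := hl
      have hlen : l.length = m := (mem_tuples.mp hltup).1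
      have hgetD : ∀ i < m, ζ i ω = l.getD i 0 := fun i hi =>
        hωl i (Finset.mem_range.mpr hi)
      have hsums : ∀ j ≤ m, (∑ i ∈ Finset.range j, ζ i ω) = (l.take j).sum := by
        intro j hj
        rw [← sum_take l j (by omega)]
        apply Finset.sum_congr rfl
        intro i hi
        exact hgetD i (by simp at hi; omega)
      constructor
      · rw [hE]
        refine ⟨?_, ?_⟩
        · rw [hsums m le_rfl, List.take_of_length_le (by omega)]
          exact hsum
        · intro j hj
          rw [hsums j (by simp at hj; omega)]
          exact hpre j hj
      · intro i hi
        rw [hgetD i hi]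
        have hilt : i < l.length := by omega
        rw [List.getD_eq_getElem l 0 hilt]
        rcases (mem_tuples.mp hltup).2 _ (List.getElem_mem hilt) with h | h <;> simp [h]
  -- core probability computation
  have hcore : ℙ {ω | H ω = m} = (fpc m k : ENNReal) * (2⁻¹ : ENNReal) ^ m := by
    have h1 : ℙ ({ω | H ω = m} ∩ G) = (fpc m k : ENNReal) * (2⁻¹ : ENNReal) ^ m := by
      rw [h_union, measure_biUnion_finset h_disj (fun l _ => h_atom_meas l)]
      rw [Finset.sum_congr rfl h_atom_prob, Finset.sum_const, fpc]
      simp [nsmul_eq_mul]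
    have hle1 : ℙ {ω | H ω = m} ≤ ℙ ({ω | H ω = m} ∩ G) := by
      calc ℙ {ω | H ω = m} ≤ ℙ (({ω | H ω = m} ∩ G) ∪ Gᶜ) := by
            apply measure_mono
            intro ω hω
            by_cases hωG : ω ∈ G
            · exact Or.inl ⟨hω, hωG⟩
            · exact Or.inr hωG
        _ ≤ ℙ ({ω | H ω = m} ∩ G) + ℙ Gᶜ := measure_union_le _ _
        _ = ℙ ({ω | H ω = m} ∩ G) := by rw [hGc, add_zero]
    have hle2 : ℙ ({ω | H ω = m} ∩ G) ≤ ℙ {ω | H ω = m} :=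
      measure_mono Set.inter_subset_left
    rw [← h1]
    exact le_antisymm hle1 hle2
  refine ⟨?_, ?_⟩
  · intro hpar
    have hκ : 1 ≤ k.natAbs := by omega
    have hfk : fpc m k = fpc m (k.natAbs : ℤ) := by
      rcases le_or_gt 0 k with h | h
      · rw [Int.natAbs_of_nonneg h]
      · rw [fpc_neg m k]
        congr 1
        omega
    have hnat := fpc_mul m hm k.natAbs hκ hpar
    have hmne : (m:ℝ) ≠ 0 := Nat.cast_ne_zero.mpr (by omega)
    have hreal : (fpc m k : ℝ)
        = (k.natAbs : ℝ) / m * (m.choose ((m + k.natAbs)/2)) := by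
      have hcast := congrArg (Nat.cast : ℕ → ℝ) hnat
      push_cast at hcast
      rw [hfk, Int.natCast_natAbs]
      field_simp
      linarith [hcast]
    rw [hcore,
      show ((fpc m k : ENNReal)) = ENNReal.ofReal (fpc m k : ℝ) by
        rw [ENNReal.ofReal_natCast],
      show ((2:ENNReal)⁻¹ ^ m) = ENNReal.ofReal ((2:ℝ)⁻¹ ^ m) by
        rw [ENNReal.ofReal_pow (by norm_num)]
        congr 1
        rw [ENNReal.ofReal_inv_of_pos (by norm_num)]
        norm_num,
      ← ENNReal.ofReal_mul (by positivity)]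
    congr 1
    rw [hreal]
  · intro hpar
    rw [hcore]
    have hz : fpc m k = 0 := by
      rw [fpc, Finset.card_eq_zero, Finset.filter_eq_empty_iff]
      intro l hl
      rintro ⟨hs, -⟩
      have hts := (tuples_sum hl).1
      rw [hs] at hts
      omega
    rw [hz]
    simp
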